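/- Let K ∈ ℝ^{n×n} be symmetric positive semi-definite with eigendecomposition K = UΛUᵀ. For t ∈ [0,∞], ρ ≥ 0, define the gradient-flow coefficient vector c_{t,ρ} = (I − exp(−(2t/n)(K + ρnI)))(K + ρnI)⁻¹ y. Then the RKHS norm squared c_{t,ρ}ᵀ K c_{t,ρ} is monotonically nondecreasing in t and is bounded above by the minimum-norm-interpolant value yᵀ K⁺ y for all t and ρ. -/

import Mathlib

open Matrix

/-- The Moore–Penrose pseudoinverse of a real symmetric matrix, via its spectral
decomposition (inverting the nonzero eigenvalues, since `(0 : ℝ)⁻¹ = 0`). -/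
noncomputable def hermPinv {n : ℕ} {K : Matrix (Fin n) (Fin n) ℝ}
    (hK : K.IsHermitian) : Matrix (Fin n) (Fin n) ℝ :=
  (hK.eigenvectorUnitary : Matrix (Fin n) (Fin n) ℝ) *
    diagonal (fun i => (hK.eigenvalues i)⁻¹) *
    star (hK.eigenvectorUnitary : Matrix (Fin n) (Fin n) ℝ)

/-- Let `K` be a symmetric PSD kernel matrix, `y ∈ ℝⁿ`, `ρ ≥ 0`, and let
`c_{t,ρ} = (I - exp(-(2t/n)(K + ρnI))) (K + ρnI)⁻¹ y` be the gradient-flow coefficients.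
Then the squared RKHS norm `c_{t,ρ}ᵀ K c_{t,ρ}` is monotonically nondecreasing in `t` and is
bounded above by the minimum-norm-interpolant value `yᵀ K⁺ y` for all `t ≥ 0` and `ρ ≥ 0`. -/
theorem gradient_flow_rkhs_norm_monotone_and_bounded
    {n : ℕ} (hn : 0 < n) (K : Matrix (Fin n) (Fin n) ℝ) (hK : K.PosSemidef)
    (y : Fin n → ℝ) (ρ : ℝ) (hρ : 0 ≤ ρ)
    (cvec : ℝ → Fin n → ℝ)
    (hcvec : ∀ t : ℝ, cvec t =
      (((1 : Matrix (Fin n) (Fin n) ℝ) -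
          NormedSpace.exp ((-(2 * t / (n : ℝ))) •
            (K + (ρ * (n : ℝ)) • (1 : Matrix (Fin n) (Fin n) ℝ)))) *
        (K + (ρ * (n : ℝ)) • (1 : Matrix (Fin n) (Fin n) ℝ))⁻¹) *ᵥ y) :
    (∀ t₁ t₂ : ℝ, 0 ≤ t₁ → t₁ ≤ t₂ →
      cvec t₁ ⬝ᵥ (K *ᵥ cvec t₁) ≤ cvec t₂ ⬝ᵥ (K *ᵥ cvec t₂)) ∧
    (∀ t : ℝ, 0 ≤ t → cvec t ⬝ᵥ (K *ᵥ cvec t) ≤ y ⬝ᵥ (hermPinv hK.1 *ᵥ y)) := by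
  classical
  have hH : K.IsHermitian := hK.1
  set U : Matrix (Fin n) (Fin n) ℝ := (hH.eigenvectorUnitary : Matrix (Fin n) (Fin n) ℝ) with hUdef
  set ev : Fin n → ℝ := hH.eigenvalues with hevdef
  have hstar : star U = Uᵀ := by ext i j; simp [Matrix.star_apply]
  have hUU : Uᵀ * U = 1 := by
    rw [← hstar]; exact (Matrix.mem_unitaryGroup_iff').mp hH.eigenvectorUnitary.2
  have hUU' : U * Uᵀ = 1 := by
    rw [← hstar]; exact (Matrix.mem_unitaryGroup_iff).mp hH.eigenvectorUnitary.2
  set conj : (Fin n → ℝ) → Matrix (Fin n) (Fin n) ℝ :=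
    fun w => U * diagonal w * Uᵀ with hconjdef
  set z : Fin n → ℝ := Uᵀ *ᵥ y with hzdef
  -- basic algebra of conj
  have hconj_mul : ∀ w v, conj w * conj v = conj (fun i => w i * v i) := by
    intro w v
    simp only [hconjdef, Matrix.mul_assoc]
    rw [← Matrix.mul_assoc Uᵀ U, hUU, Matrix.one_mul,
      ← Matrix.mul_assoc (diagonal w) (diagonal v), Matrix.diagonal_mul_diagonal]
  have hone : conj (fun _ => 1) = 1 := by
    have h1 : diagonal (fun _ : Fin n => (1:ℝ)) = 1 := Matrix.diagonal_one
    simp only [hconjdef, h1, Matrix.mul_one, hUU']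
  have hsub : ∀ w v, conj w - conj v = conj (fun i => w i - v i) := by
    intro w v
    simp only [hconjdef]
    rw [← Matrix.sub_mul, ← Matrix.mul_sub, Matrix.diagonal_sub]
  have hsmul : ∀ (s : ℝ) w, s • conj w = conj (fun i => s * w i) := by
    intro s w
    simp only [hconjdef]
    have h1 : (fun i => s * w i) = s • w := rfl
    rw [h1, Matrix.diagonal_smul, Matrix.mul_smul, Matrix.smul_mul]
  have hsymT : ∀ w, (conj w)ᵀ = conj w := by
    intro w
    simp only [hconjdef]
    simp [Matrix.transpose_mul, Matrix.diagonal_transpose, Matrix.mul_assoc]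
  have hdt : ∀ (A : Matrix (Fin n) (Fin n) ℝ) (u v : Fin n → ℝ),
      (A *ᵥ u) ⬝ᵥ v = u ⬝ᵥ (Aᵀ *ᵥ v) := by
    intro A u v
    symm
    rw [Matrix.dotProduct_mulVec, Matrix.vecMul_transpose]
  -- quadratic form
  have hquad : ∀ w, y ⬝ᵥ (conj w *ᵥ y) = ∑ i, w i * z i ^ 2 := by
    intro w
    have h1 : conj w *ᵥ y = U *ᵥ (diagonal w *ᵥ z) := by
      simp only [hconjdef, hzdef, ← Matrix.mulVec_mulVec]
    rw [h1, Matrix.dotProduct_mulVec, ← Matrix.mulVec_transpose, ← hzdef]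
    simp only [dotProduct, Matrix.mulVec_diagonal]
    exact Finset.sum_congr rfl fun i _ => by ring
  -- spectral theorem
  have hspec : K = conj ev := by
    have h := hH.spectral_theorem
    rw [Unitary.conjStarAlgAut_apply, hstar, RCLike.ofReal_real_eq_id] at h
    simpa only [Function.id_comp] using h
  have hpinv : hermPinv hK.1 = conj (fun i => (ev i)⁻¹) := by
    rw [hermPinv, hstar]
  -- quadratic form of cvec-type vectors
  have hqf : ∀ w, (conj w *ᵥ y) ⬝ᵥ (K *ᵥ (conj w *ᵥ y))
      = ∑ i, ev i * w i ^ 2 * z i ^ 2 := by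
    intro w
    have h1 : K *ᵥ (conj w *ᵥ y) = conj (fun i => ev i * w i) *ᵥ y := by
      rw [hspec, Matrix.mulVec_mulVec, hconj_mul]
    rw [h1, hdt, hsymT, Matrix.mulVec_mulVec, hconj_mul, hquad]
    exact Finset.sum_congr rfl fun i _ => by ring
  have hev0 : ∀ i, 0 ≤ ev i := fun i => hK.eigenvalues_nonneg i
  set d : Fin n → ℝ := fun i => ev i + ρ * n with hddef
  have hd0 : ∀ i, 0 ≤ d i := by
    intro i
    have : 0 ≤ ρ * n := mul_nonneg hρ (Nat.cast_nonneg n)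
    simp only [hddef]; linarith [hev0 i]
  have hM : K + (ρ * (n:ℝ)) • (1 : Matrix (Fin n) (Fin n) ℝ) = conj d := by
    have h1 : (ρ * (n:ℝ)) • (1 : Matrix (Fin n) (Fin n) ℝ) = conj (fun _ => ρ * n) := by
      rw [← hone, hsmul]; simp
    rw [hspec, h1]
    simp only [hconjdef]
    rw [← Matrix.add_mul, ← Matrix.mul_add, Matrix.diagonal_add]
  by_cases hd : ∀ i, d i ≠ 0
  · -- nondegenerate case
    have hdpos : ∀ i, 0 < d i := fun i => lt_of_le_of_ne (hd0 i) (Ne.symm (hd i))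
    have hUunit : IsUnit U := by
      rw [Matrix.isUnit_iff_isUnit_det]
      exact IsUnit.of_mul_eq_one _ (by rw [← Matrix.det_mul, hUU', Matrix.det_one])
    have hUinv : U⁻¹ = Uᵀ := Matrix.inv_eq_right_inv hUU'
    have hinv : (conj d)⁻¹ = conj (fun i => (d i)⁻¹) := by
      apply Matrix.inv_eq_right_inv
      rw [hconj_mul, ← hone]
      have h1 : (fun i => d i * (d i)⁻¹) = (fun _ : Fin n => (1:ℝ)) :=
        funext fun i => mul_inv_cancel₀ (hd i)
      rw [h1]
    have hexp : ∀ s : ℝ, NormedSpace.exp (s • conj d)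
        = conj (fun i => Real.exp (s * d i)) := by
      intro s
      rw [hsmul]
      have h1 : conj (fun i => s * d i) = U * diagonal (fun i => s * d i) * U⁻¹ := by
        rw [hUinv]
      have h2 : NormedSpace.exp (fun i => s * d i) = fun i => Real.exp (s * d i) := by
        rw [Pi.exp_def]
        funext i
        exact (congrFun Real.exp_eq_exp_ℝ _).symm
      rw [h1, Matrix.exp_conj U _ hUunit, Matrix.exp_diagonal, hUinv, h2]
    set g : ℝ → Fin n → ℝ :=
      fun t i => (1 - Real.exp (-(2 * t / n) * d i)) * (d i)⁻¹ with hgdef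
    have hcv : ∀ t, cvec t = conj (g t) *ᵥ y := by
      intro t
      rw [hcvec t, hM, hinv, hexp, ← hone, hsub, hconj_mul]
    have hform : ∀ t, cvec t ⬝ᵥ (K *ᵥ cvec t) = ∑ i, ev i * g t i ^ 2 * z i ^ 2 := by
      intro t
      rw [hcv t, hqf]
    have hgnonneg : ∀ t, 0 ≤ t → ∀ i, 0 ≤ g t i := by
      intro t ht i
      apply mul_nonneg _ (inv_nonneg.mpr (hd0 i))
      have : Real.exp (-(2 * t / n) * d i) ≤ 1 := by
        rw [← Real.exp_zero]
        apply Real.exp_le_exp.mpr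
        have h2 : 0 ≤ 2 * t / n := by positivity
        nlinarith [mul_nonneg h2 (hdpos i).le]
      linarith
    have hgmono : ∀ t₁ t₂, 0 ≤ t₁ → t₁ ≤ t₂ → ∀ i, g t₁ i ≤ g t₂ i := by
      intro t₁ t₂ ht₁ h12 i
      apply mul_le_mul_of_nonneg_right _ (inv_nonneg.mpr (hd0 i))
      have : Real.exp (-(2 * t₂ / n) * d i) ≤ Real.exp (-(2 * t₁ / n) * d i) := by
        apply Real.exp_le_exp.mpr
        have hn' : (0:ℝ) < n := by exact_mod_cast hn
        have hdiv : 2 * t₁ / (n:ℝ) ≤ 2 * t₂ / n := (div_le_div_iff_of_pos_right hn').mpr (by linarith)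
        nlinarith [mul_le_mul_of_nonneg_right hdiv (hd0 i)]
      linarith
    constructor
    · intro t₁ t₂ ht₁ h12
      rw [hform, hform]
      apply Finset.sum_le_sum
      intro i _
      have h1 : g t₁ i ^ 2 ≤ g t₂ i ^ 2 :=
        pow_le_pow_left₀ (hgnonneg t₁ ht₁ i) (hgmono t₁ t₂ ht₁ h12 i) 2
      exact mul_le_mul_of_nonneg_right
        (mul_le_mul_of_nonneg_left h1 (hev0 i)) (sq_nonneg (z i))
    · intro t ht
      rw [hform, hpinv, hquad]
      apply Finset.sum_le_sum
      intro i _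
      rcases eq_or_lt_of_le (hev0 i) with h0 | hpos
      · rw [← h0]; simp
      · have hgle : g t i ≤ (ev i)⁻¹ := by
          have h1 : g t i ≤ (d i)⁻¹ := by
            rw [hgdef]
            have : (1 - Real.exp (-(2 * t / n) * d i)) ≤ 1 := by
              have := Real.exp_pos (-(2 * t / n) * d i); linarith
            calc (1 - Real.exp (-(2 * t / n) * d i)) * (d i)⁻¹
                ≤ 1 * (d i)⁻¹ := mul_le_mul_of_nonneg_right this (inv_nonneg.mpr (hd0 i))
              _ = (d i)⁻¹ := one_mul _
          have h2 : (d i)⁻¹ ≤ (ev i)⁻¹ := by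
            apply inv_anti₀ hpos
            simp only [hddef]
            nlinarith [mul_nonneg hρ (Nat.cast_nonneg (α := ℝ) n)]
          linarith
        have hg0 := hgnonneg t ht i
        have h3 : ev i * g t i ^ 2 ≤ (ev i)⁻¹ := by
          have h4 : g t i ^ 2 ≤ (ev i)⁻¹ ^ 2 := pow_le_pow_left₀ hg0 hgle 2
          calc ev i * g t i ^ 2 ≤ ev i * (ev i)⁻¹ ^ 2 :=
                mul_le_mul_of_nonneg_left h4 (hev0 i)
            _ = (ev i)⁻¹ := by field_simp
        exact mul_le_mul_of_nonneg_right h3 (sq_nonneg (z i))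
  · -- degenerate case: (K + ρnI)⁻¹ = 0
    push_neg at hd
    obtain ⟨i₀, hi₀⟩ := hd
    have hdet : (K + (ρ * (n:ℝ)) • (1 : Matrix (Fin n) (Fin n) ℝ)).det = 0 := by
      rw [hM]
      simp only [hconjdef]
      rw [Matrix.det_mul, Matrix.det_mul, Matrix.det_diagonal]
      have : ∏ i, d i = 0 := Finset.prod_eq_zero (Finset.mem_univ i₀) hi₀
      rw [this]; ring
    have hinv0 : (K + (ρ * (n:ℝ)) • (1 : Matrix (Fin n) (Fin n) ℝ))⁻¹ = 0 := by
      apply Matrix.nonsing_inv_apply_not_isUnit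
      rw [hdet]; exact not_isUnit_zero
    have hcv0 : ∀ t, cvec t = 0 := by
      intro t
      rw [hcvec t, hinv0, Matrix.mul_zero, Matrix.zero_mulVec]
    constructor
    · intro t₁ t₂ _ _
      rw [hcv0 t₁, hcv0 t₂]
    · intro t _
      rw [hcv0 t]
      simp only [Matrix.mulVec_zero, dotProduct_zero, zero_dotProduct]
      rw [hpinv, hquad]
      apply Finset.sum_nonneg
      intro i _
      exact mul_nonneg (inv_nonneg.mpr (hev0 i)) (sq_nonneg _)
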